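/- The solution (Y_k)_{k∈ℤ} of the recursion Y_{k+1}·Y_{k-1} = 2(2k+1)·Y_k² with initial conditions Y_0 = Y_1 = 1 is given explicitly by Y_k = ∏_{j=1}^k (2j−1)!/(j−1)! for k ≥ 0, and Y_k = (−1)^{k(k+1)/2}/2^{2k+1} · ∏_{j=1}^{−k−1} (2j−1)!/(j−1)! for k < 0. -/

import Mathlib

open Finset

private noncomputable def Fprod (n : ℕ) : ℚ :=
  ∏ j ∈ Finset.range n, ((2 * j + 1).factorial : ℚ) / (j.factorial : ℚ)

private lemma Fprod_ne (n : ℕ) : Fprod n ≠ 0 := by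
  unfold Fprod
  apply Finset.prod_ne_zero_iff.mpr
  intro j _
  positivity

private lemma Fprod_succ (n : ℕ) :
    Fprod (n + 1) = Fprod n * (((2 * n + 1).factorial : ℚ) / (n.factorial : ℚ)) := by
  unfold Fprod
  rw [Finset.prod_range_succ]

private lemma ratio_step (n : ℕ) :
    (((2 * (n + 1) + 1).factorial : ℚ) / ((n + 1).factorial : ℚ)) =
      2 * (2 * (n : ℚ) + 3) * (((2 * n + 1).factorial : ℚ) / (n.factorial : ℚ)) := by
  have h1 : (2 * (n + 1) + 1).factorial = (2 * n + 3) * ((2 * n + 2) * (2 * n + 1).factorial) := by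
    rw [show 2 * (n + 1) + 1 = (2 * n + 1) + 1 + 1 by ring, Nat.factorial_succ,
      Nat.factorial_succ]
  have h2 : (n + 1).factorial = (n + 1) * n.factorial := Nat.factorial_succ n
  rw [h1, h2]
  have hf : (n.factorial : ℚ) ≠ 0 := by positivity
  have hn1 : ((n : ℚ) + 1) ≠ 0 := by positivity
  push_cast
  field_simp

private lemma Fprod_rec (n : ℕ) :
    Fprod (n + 2) * Fprod n = 2 * (2 * (n : ℚ) + 3) * (Fprod (n + 1)) ^ 2 := by
  rw [show n + 2 = (n + 1) + 1 from rfl, Fprod_succ (n+1), Fprod_succ n, ratio_step]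
  ring

theorem recursion_Y_explicit (Y : ℤ → ℚ) (h0 : Y 0 = 1) (h1 : Y 1 = 1)
    (hne : ∀ k : ℤ, Y k ≠ 0)
    (hrec : ∀ k : ℤ, Y (k + 1) * Y (k - 1) = 2 * (2 * (k : ℚ) + 1) * (Y k) ^ 2) :
    (∀ n : ℕ, Y (n : ℤ) = ∏ j ∈ Finset.range n, ((2 * j + 1).factorial : ℚ) / (j.factorial : ℚ)) ∧
    (∀ n : ℕ, Y (-(n : ℤ) - 1) =
      (-1 : ℚ) ^ ((n + 1) * n / 2) / (2 : ℚ) ^ (2 * (-(n : ℤ) - 1) + 1) *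
        ∏ j ∈ Finset.range n, ((2 * j + 1).factorial : ℚ) / (j.factorial : ℚ)) := by
  have hF1 : Fprod 1 = 1 := by
    unfold Fprod; simp
  -- forward direction
  have hfwd : ∀ n : ℕ, Y (n : ℤ) = Fprod n ∧ Y ((n : ℤ) + 1) = Fprod (n + 1) := by
    intro n
    induction n with
    | zero => exact ⟨by simpa [Fprod] using h0, by rw [hF1]; simpa using h1⟩
    | succ n ih =>
      obtain ⟨ihn, ihn1⟩ := ih
      refine ⟨by push_cast; exact ihn1, ?_⟩
      have h := hrec ((n : ℤ) + 1)
      have e2 : ((n : ℤ) + 1) - 1 = ((n : ℕ) : ℤ) := by ring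
      rw [e2, ihn, ihn1] at h
      have hcast : (((n : ℤ) + 1 : ℤ) : ℚ) = (n : ℚ) + 1 := by push_cast; ring
      rw [hcast] at h
      have h2 : Y ((n : ℤ) + 1 + 1) * Fprod n = Fprod (n + 2) * Fprod n := by
        rw [h, Fprod_rec]
        ring
      have h3 := mul_right_cancel₀ (Fprod_ne n) h2
      have e3 : (((n : ℕ) + 1 : ℕ) : ℤ) + 1 = (n : ℤ) + 1 + 1 := by push_cast; ring
      rw [e3, h3]
  -- backward direction: T n := sign * 2^(2n+1) * Fprod n
  set T : ℕ → ℚ := fun n => (-1 : ℚ) ^ ((n + 1) * n / 2) * 2 ^ (2 * n + 1) * Fprod n with hT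
  have hTrec : ∀ n : ℕ, T (n + 2) * T n = -(2 * (2 * (n : ℚ) + 3)) * (T (n + 1)) ^ 2 := by
    intro n
    simp only [hT]
    obtain ⟨c, hc⟩ := Nat.even_mul_succ_self n
    have e2 : (n + 2 + 1) * (n + 2) / 2 = (n + 1) * n / 2 + (2 * n + 3) := by
      have h1 : (n + 2 + 1) * (n + 2) = n * (n + 1) + (4 * n + 6) := by ring
      have h2 : (n + 1) * n = n * (n + 1) := by ring
      rw [h1, h2, hc]; omega
    have e1 : (n + 1 + 1) * (n + 1) / 2 = (n + 1) * n / 2 + (n + 1) := by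
      have h1 : (n + 1 + 1) * (n + 1) = n * (n + 1) + (2 * n + 2) := by ring
      have h2 : (n + 1) * n = n * (n + 1) := by ring
      rw [h1, h2, hc]; omega
    rw [e1, e2]
    set a := (n + 1) * n / 2 with ha
    set s := ((-1 : ℚ)) ^ a with hs
    have hsq : s * s = 1 := by
      rw [hs, ← pow_add]
      have : a + a = 2 * a := by ring
      rw [this, pow_mul]; norm_num
    have h1 : ((-1 : ℚ)) ^ (a + (2 * n + 3)) = -s := by
      rw [pow_add, hs]
      have : ((-1 : ℚ)) ^ (2 * n + 3) = -1 := by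
        rw [pow_add, pow_mul]; norm_num
      rw [this]; ring
    have h1' : ((-1 : ℚ)) ^ (a + (n + 1)) * ((-1 : ℚ)) ^ (a + (n + 1)) = 1 := by
      rw [← pow_add]
      have : a + (n + 1) + (a + (n + 1)) = 2 * (a + (n + 1)) := by ring
      rw [this, pow_mul]; norm_num
    have key := Fprod_rec n
    rw [h1]
    set t := ((-1 : ℚ)) ^ (a + (n + 1)) with ht
    have h2p : (2 : ℚ) ^ (2 * (n + 2) + 1) * 2 ^ (2 * n + 1) =
        2 ^ (2 * (n + 1) + 1) * 2 ^ (2 * (n + 1) + 1) := by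
      rw [← pow_add, ← pow_add]
      congr 1
      ring
    linear_combination (-(2 : ℚ) ^ (2 * (n + 2) + 1) * 2 ^ (2 * n + 1) * Fprod (n + 2) *
        Fprod n) * hsq +
      (2 * (2 * (n : ℚ) + 3) * ((2 : ℚ) ^ (2 * (n + 1) + 1)) ^ 2 * Fprod (n + 1) ^ 2) * h1' +
      (-(Fprod (n + 2) * Fprod n)) * h2p +
      (-((2 : ℚ) ^ (2 * (n + 1) + 1)) ^ 2) * key
  have hbwd : ∀ n : ℕ, Y (-(n : ℤ) - 1) = T n ∧ Y (-((n : ℤ) + 1) - 1) = T (n + 1) := by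
    intro n
    induction n with
    | zero =>
      have hm1 : Y (-1) = 2 := by
        have h := hrec 0
        rw [show (0 : ℤ) + 1 = 1 from rfl, show (0 : ℤ) - 1 = -1 from rfl, h0, h1] at h
        simp at h
        linarith
      have hm2 : Y (-2) = -8 := by
        have h := hrec (-1)
        rw [show (-1 : ℤ) + 1 = 0 from rfl, show (-1 : ℤ) - 1 = -2 from rfl, h0, hm1] at h
        push_cast at h
        linarith
      constructor
      · simp only [hT]
        rw [show -((0 : ℕ) : ℤ) - 1 = (-1 : ℤ) by norm_num, hm1]
        simp [Fprod]
      · simp only [hT]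
        rw [show -(((0 : ℕ) : ℤ) + 1) - 1 = (-2 : ℤ) by norm_num, hm2, hF1]
        norm_num
    | succ n ih =>
      obtain ⟨ihn, ihn1⟩ := ih
      have hfst : Y (-((n + 1 : ℕ) : ℤ) - 1) = T (n + 1) := by
        rw [show -(((n + 1 : ℕ) : ℤ)) - 1 = -((n : ℤ) + 1) - 1 by push_cast; ring]
        exact ihn1
      refine ⟨hfst, ?_⟩
      have h := hrec (-(n : ℤ) - 2)
      have e1 : (-(n : ℤ) - 2) + 1 = -(n : ℤ) - 1 := by ring
      have e2 : (-(n : ℤ) - 2) - 1 = -(n : ℤ) - 3 := by ring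
      have e3 : Y (-(n : ℤ) - 2) = T (n + 1) := by
        rw [show (-(n : ℤ) - 2) = -((n : ℤ) + 1) - 1 by ring]; exact ihn1
      rw [e1, e2, ihn, e3] at h
      have hc : ((-(n : ℤ) - 2 : ℤ) : ℚ) = -(n : ℚ) - 2 := by push_cast; ring
      rw [hc] at h
      have h2 : Y (-(n : ℤ) - 3) * T n = T (n + 2) * T n := by
        have := hTrec n
        nlinarith [this, h]
      have hTn : T n ≠ 0 := by
        simp only [hT]
        have := Fprod_ne n
        positivity
      have h3 := mul_right_cancel₀ hTn h2
      rw [show -(((n + 1 : ℕ) : ℤ) + 1) - 1 = -(n : ℤ) - 3 by push_cast; ring, h3]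
  constructor
  · intro n; exact (hfwd n).1
  · intro n
    have h := (hbwd n).1
    rw [h]
    simp only [hT]
    rw [show (2 * (-(n : ℤ) - 1) + 1) = -((2 * n + 1 : ℕ) : ℤ) by push_cast; ring,
      zpow_neg, zpow_natCast]
    unfold Fprod
    field_simp
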